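/- arXiv:1507.01423 — 10 statements merged into one kernel-verified Lean document; each statement's English description precedes it below -/
import Mathlib

section
/- Let C be a complete lattice and let f, g : C → SL(C) be EM-monotone multivalued functions whose values are nonempty subcomplete sublattices of C. If f(c) ⪯_EM g(c) for every c ∈ C, then Fix(f) ⪯_EM Fix(g), where Fix(h) = {x ∈ C : x ∈ h(x)}. -/
/-- Smyth preorder on subsets. -/
def SmythLE {β : Type*} [LE β] (X Y : Set β) : Prop := ∀ y ∈ Y, ∃ x ∈ X, x ≤ y

/-- Hoare preorder on subsets. -/
def HoareLE {β : Type*} [LE β] (X Y : Set β) : Prop := ∀ x ∈ X, ∃ y ∈ Y, x ≤ y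

/-- Egli-Milner preorder on subsets. -/
def EgliMilnerLE {β : Type*} [LE β] (X Y : Set β) : Prop := SmythLE X Y ∧ HoareLE X Y

/-- if `f, g : C → SL(C)` are EM-monotone multivalued functions on a
complete lattice whose values are nonempty subcomplete sublattices, and
`f(c) ⪯_EM g(c)` for every `c`, then `Fix(f) ⪯_EM Fix(g)`. -/
theorem fixed_points_EM_monotone {β : Type*} [CompleteLattice β] (f g : β → Set β)
    (hfSL : ∀ c, (f c).Nonempty ∧
      ∀ Z ⊆ f c, Z.Nonempty → sInf Z ∈ f c ∧ sSup Z ∈ f c)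
    (hgSL : ∀ c, (g c).Nonempty ∧
      ∀ Z ⊆ g c, Z.Nonempty → sInf Z ∈ g c ∧ sSup Z ∈ g c)
    (hfmono : ∀ x y : β, x ≤ y → EgliMilnerLE (f x) (f y))
    (hgmono : ∀ x y : β, x ≤ y → EgliMilnerLE (g x) (g y))
    (hfg : ∀ c, EgliMilnerLE (f c) (g c)) :
    EgliMilnerLE {x | x ∈ f x} {x | x ∈ g x} := by
  constructor
  · -- Smyth: for every fixed point y of g there is a fixed point x of f with x ≤ y
    intro y hy
    set F : β → β := fun c => sInf (f c) with hFdef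
    have Fmono : Monotone F := by
      intro a b hab
      refine le_sInf fun z hz => ?_
      obtain ⟨w, hw, hwz⟩ := (hfmono a b hab).1 z hz
      exact (sInf_le hw).trans hwz
    have hFy : F y ≤ y := by
      obtain ⟨a, ha, hay⟩ := (hfg y).1 y hy
      exact (sInf_le ha).trans hay
    set x := sInf {c | F c ≤ c} with hxdef
    have hxle : x ≤ y := sInf_le hFy
    have hFx : F x ≤ x := le_sInf fun c hc => (Fmono (sInf_le hc)).trans hc
    have hxF : x ≤ F x := sInf_le (Fmono hFx)
    have hfix : F x = x := le_antisymm hFx hxF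
    refine ⟨x, ?_, hxle⟩
    have hmem : sInf (f x) ∈ f x :=
      ((hfSL x).2 (f x) (fun a ha => ha) (hfSL x).1).1
    show x ∈ f x
    rwa [show sInf (f x) = x from hfix] at hmem
  · -- Hoare: for every fixed point x of f there is a fixed point y of g with x ≤ y
    intro x hx
    set G : β → β := fun c => sSup (g c) with hGdef
    have Gmono : Monotone G := by
      intro a b hab
      refine sSup_le fun z hz => ?_
      obtain ⟨w, hw, hzw⟩ := (hgmono a b hab).2 z hz
      exact hzw.trans (le_sSup hw)
    have hGx : x ≤ G x := by
      obtain ⟨a, ha, hxa⟩ := (hfg x).2 x hx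
      exact hxa.trans (le_sSup ha)
    set y := sSup {c | c ≤ G c} with hydef
    have hley : x ≤ y := le_sSup hGx
    have hyG : y ≤ G y := sSup_le fun c hc => hc.trans (Gmono (le_sSup hc))
    have hGy : G y ≤ y := le_sSup (Gmono hyG)
    have hfix : G y = y := le_antisymm hGy hyG
    refine ⟨y, ?_, hley⟩
    have hmem : sSup (g y) ∈ g y :=
      ((hgSL y).2 (g y) (fun a ha => ha) (hgSL y).1).2
    show y ∈ g y
    rwa [show sSup (g y) = y from hfix] at hmem
end

section
/- Let C and A be complete lattices, γ : A → C a monotone concretization map, f : C → ℘∧(C) an S-monotone multivalued function, and f♯ : A → ℘∧(A) an S-correct approximation of f (i.e., f♯ is S-monotone and f(γ(a)) ⪯_S γ^s(f♯(a)) for every a ∈ A). Then lfp(f) ≤_C γ(lfp(f♯)), where lfp denotes the least fixed point (which exists for both f and f♯). -/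
private lemma smyth_sInf_mono {β : Type*} [CompleteLattice β] {X Y : Set β}
    (h : SmythLE X Y) : sInf X ≤ sInf Y := by
  apply le_sInf
  intro y hy
  obtain ⟨x, hx, hxy⟩ := h y hy
  exact le_trans (sInf_le hx) hxy

private lemma lfp_exists {β : Type*} [CompleteLattice β]
    (f : β → Set β) (hf₁ : ∀ c, sInf (f c) ∈ f c)
    (hf₂ : ∀ x y : β, x ≤ y → SmythLE (f x) (f y)) :
    IsLeast {x | x ∈ f x} (OrderHom.lfp ⟨fun x => sInf (f x), fun x y h => smyth_sInf_mono (hf₂ x y h)⟩) := by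
  set g : β →o β := ⟨fun x => sInf (f x), fun x y h => smyth_sInf_mono (hf₂ x y h)⟩
  constructor
  · have h2 : sInf (f (OrderHom.lfp g)) ∈ f (OrderHom.lfp g) := hf₁ _
    have heq : sInf (f (OrderHom.lfp g)) = OrderHom.lfp g := OrderHom.map_lfp g
    rw [heq] at h2
    exact h2
  · intro x hx
    exact OrderHom.lfp_le g (sInf_le hx)

/-- correct least fixed point approximation: if `f♯ : A → ℘∧(A)` is an
S-correct approximation (over a monotone concretization `γ : A → C`) of an
S-monotone `f : C → ℘∧(C)`, then both least fixed points exist and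
`lfp(f) ≤ γ(lfp(f♯))`. -/
theorem correct_lfp_approximation {C A : Type*} [CompleteLattice C] [CompleteLattice A]
    (γ : A → C) (hγ : Monotone γ)
    (f : C → Set C) (hf₁ : ∀ c, sInf (f c) ∈ f c)
    (hf₂ : ∀ x y : C, x ≤ y → SmythLE (f x) (f y))
    (f' : A → Set A) (hf'₁ : ∀ a, sInf (f' a) ∈ f' a)
    (hf'₂ : ∀ x y : A, x ≤ y → SmythLE (f' x) (f' y))
    (hcorrect : ∀ a : A, SmythLE (f (γ a)) (γ '' f' a)) :
    (∃ L, IsLeast {x | x ∈ f x} L) ∧ (∃ L', IsLeast {a | a ∈ f' a} L') ∧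
    ∀ L L', IsLeast {x | x ∈ f x} L → IsLeast {a | a ∈ f' a} L' → L ≤ γ L' := by
  refine ⟨⟨_, lfp_exists f hf₁ hf₂⟩, ⟨_, lfp_exists f' hf'₁ hf'₂⟩, ?_⟩
  intro L L' hL hL'
  -- L' is a fixed point of f', so γ L' bounds a fixed point of f from above? use prefixed point
  -- show sInf (f (γ L')) ≤ γ L'
  have hL'fix : L' ∈ f' L' := hL'.1
  have h1 : γ L' ∈ γ '' f' L' := ⟨L', hL'fix, rfl⟩
  obtain ⟨w, hw, hwle⟩ := hcorrect L' (γ L') h1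
  have hpre : sInf (f (γ L')) ≤ γ L' := le_trans (sInf_le hw) hwle
  -- L equals the lfp of g, which is ≤ any prefixed point
  set g : C →o C := ⟨fun x => sInf (f x), fun x y h => smyth_sInf_mono (hf₂ x y h)⟩
  have hLeq : L = OrderHom.lfp g := hL.unique (lfp_exists f hf₁ hf₂)
  rw [hLeq]
  exact OrderHom.lfp_le g hpre
end

section
/- Let (α, C, A, γ) be a Galois connection between complete lattices. Then (α^s, ⟨℘∧(C), ⪯_S⟩, ⟨℘∧(A), ⪯_S⟩, γ^s) is a preorder-Galois connection: α^s and γ^s are monotone with respect to the Smyth preorders (X ⪯_S X' implies α^s(X) ⪯_S α^s(X'), and Y ⪯_S Y' implies γ^s(Y) ⪯_S γ^s(Y')), and for all X ∈ ℘∧(C) and Y ∈ ℘∧(A), α^s(X) ⪯_S Y ⟺ X ⪯_S γ^s(Y). -/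
/-- a Galois connection `(α, C, A, γ)` between complete lattices lifts
pointwise to a preorder-Galois connection
`(α^s, ⟨℘∧(C), ⪯_S⟩, ⟨℘∧(A), ⪯_S⟩, γ^s)` for the Smyth preorders. -/
theorem smyth_preorder_galois_connection {C A : Type*}
    [CompleteLattice C] [CompleteLattice A]
    (α : C → A) (γ : A → C) (hgc : GaloisConnection α γ) :
    (∀ X X' : Set C, sInf X ∈ X → sInf X' ∈ X' →
      SmythLE X X' → SmythLE (α '' X) (α '' X')) ∧
    (∀ Y Y' : Set A, sInf Y ∈ Y → sInf Y' ∈ Y' →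
      SmythLE Y Y' → SmythLE (γ '' Y) (γ '' Y')) ∧
    (∀ (X : Set C) (Y : Set A), sInf X ∈ X → sInf Y ∈ Y →
      (SmythLE (α '' X) Y ↔ SmythLE X (γ '' Y))) := by
  refine ⟨?_, ?_, ?_⟩
  · rintro X X' _ _ h _ ⟨x', hx', rfl⟩
    obtain ⟨x, hx, hle⟩ := h x' hx'
    exact ⟨α x, ⟨x, hx, rfl⟩, hgc.monotone_l hle⟩
  · rintro Y Y' _ _ h _ ⟨y', hy', rfl⟩
    obtain ⟨y, hy, hle⟩ := h y' hy'
    exact ⟨γ y, ⟨y, hy, rfl⟩, hgc.monotone_u hle⟩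
  · intro X Y _ _
    constructor
    · rintro h _ ⟨y, hy, rfl⟩
      obtain ⟨_, ⟨x, hx, rfl⟩, hle⟩ := h y hy
      exact ⟨x, hx, hgc.le_u hle⟩
    · intro h y hy
      obtain ⟨x, hx, hle⟩ := h (γ y) ⟨y, hy, rfl⟩
      exact ⟨α x, ⟨x, hx, rfl⟩, hgc.l_le hle⟩
end

section
/- Let (α, C, A, γ) be a Galois connection between complete lattices. Then (α^s, ⟨℘∨(C), ⪯_H⟩, ⟨℘∨(A), ⪯_H⟩, γ^s) and (α^s, ⟨℘◇(C), ⪯_EM⟩, ⟨℘◇(A), ⪯_EM⟩, γ^s) are preorder-Galois connections: α^s and γ^s are monotone with respect to the Hoare (respectively Egli-Milner) preorders, and for all X ∈ ℘∨(C), Y ∈ ℘∨(A) (respectively X ∈ ℘◇(C), Y ∈ ℘◇(A)), α^s(X) ⪯_H Y ⟺ X ⪯_H γ^s(Y) (respectively α^s(X) ⪯_EM Y ⟺ X ⪯_EM γ^s(Y)). -/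
section Helpers
variable {C A : Type*} [Preorder C] [Preorder A]

lemma hoareLE_image {f : C → A} (hf : Monotone f) {X X' : Set C}
    (h : HoareLE X X') : HoareLE (f '' X) (f '' X') := by
  rintro _ ⟨x, hx, rfl⟩
  obtain ⟨x', hx', hle⟩ := h x hx
  exact ⟨f x', ⟨x', hx', rfl⟩, hf hle⟩

lemma smythLE_image {f : C → A} (hf : Monotone f) {X X' : Set C}
    (h : SmythLE X X') : SmythLE (f '' X) (f '' X') := by
  rintro _ ⟨x', hx', rfl⟩
  obtain ⟨x, hx, hle⟩ := h x' hx'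
  exact ⟨f x, ⟨x, hx, rfl⟩, hf hle⟩

end Helpers

section GCHelpers
variable {C A : Type*} [CompleteLattice C] [CompleteLattice A]
  {α : C → A} {γ : A → C}

lemma hoare_adj (hgc : GaloisConnection α γ) {X : Set C} {Y : Set A} :
    HoareLE (α '' X) Y ↔ HoareLE X (γ '' Y) := by
  constructor
  · intro h x hx
    obtain ⟨y, hy, hle⟩ := h (α x) ⟨x, hx, rfl⟩
    exact ⟨γ y, ⟨y, hy, rfl⟩, hgc.le_u hle⟩
  · rintro h _ ⟨x, hx, rfl⟩
    obtain ⟨_, ⟨y, hy, rfl⟩, hle⟩ := h x hx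
    exact ⟨y, hy, hgc.l_le hle⟩

lemma smyth_adj (hgc : GaloisConnection α γ) {X : Set C} {Y : Set A} :
    SmythLE (α '' X) Y ↔ SmythLE X (γ '' Y) := by
  constructor
  · rintro h _ ⟨y, hy, rfl⟩
    obtain ⟨_, ⟨x, hx, rfl⟩, hle⟩ := h y hy
    exact ⟨x, hx, hgc.le_u hle⟩
  · intro h y hy
    obtain ⟨x, hx, hle⟩ := h (γ y) ⟨y, hy, rfl⟩
    exact ⟨α x, ⟨x, hx, rfl⟩, hgc.l_le hle⟩

end GCHelpers

/-- a Galois connection `(α, C, A, γ)` between complete lattices lifts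
pointwise to preorder-Galois connections
`(α^s, ⟨℘∨(C), ⪯_H⟩, ⟨℘∨(A), ⪯_H⟩, γ^s)` and
`(α^s, ⟨℘◇(C), ⪯_EM⟩, ⟨℘◇(A), ⪯_EM⟩, γ^s)` for the Hoare and Egli-Milner preorders. -/
theorem hoare_and_egliMilner_preorder_galois_connections {C A : Type*}
    [CompleteLattice C] [CompleteLattice A]
    (α : C → A) (γ : A → C) (hgc : GaloisConnection α γ) :
    -- Hoare lifting
    ((∀ X X' : Set C, sSup X ∈ X → sSup X' ∈ X' →
        HoareLE X X' → HoareLE (α '' X) (α '' X')) ∧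
      (∀ Y Y' : Set A, sSup Y ∈ Y → sSup Y' ∈ Y' →
        HoareLE Y Y' → HoareLE (γ '' Y) (γ '' Y')) ∧
      (∀ (X : Set C) (Y : Set A), sSup X ∈ X → sSup Y ∈ Y →
        (HoareLE (α '' X) Y ↔ HoareLE X (γ '' Y)))) ∧
    -- Egli-Milner lifting
    ((∀ X X' : Set C, sInf X ∈ X ∧ sSup X ∈ X → sInf X' ∈ X' ∧ sSup X' ∈ X' →
        EgliMilnerLE X X' → EgliMilnerLE (α '' X) (α '' X')) ∧
      (∀ Y Y' : Set A, sInf Y ∈ Y ∧ sSup Y ∈ Y → sInf Y' ∈ Y' ∧ sSup Y' ∈ Y' →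
        EgliMilnerLE Y Y' → EgliMilnerLE (γ '' Y) (γ '' Y')) ∧
      (∀ (X : Set C) (Y : Set A), sInf X ∈ X ∧ sSup X ∈ X → sInf Y ∈ Y ∧ sSup Y ∈ Y →
        (EgliMilnerLE (α '' X) Y ↔ EgliMilnerLE X (γ '' Y)))) := by
  refine ⟨⟨fun X X' _ _ h => hoareLE_image hgc.monotone_l h,
    fun Y Y' _ _ h => hoareLE_image hgc.monotone_u h,
    fun X Y _ _ => hoare_adj hgc⟩,
    fun X X' _ _ h => ⟨smythLE_image hgc.monotone_l h.1, hoareLE_image hgc.monotone_l h.2⟩,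
    fun Y Y' _ _ h => ⟨smythLE_image hgc.monotone_u h.1, hoareLE_image hgc.monotone_u h.2⟩,
    fun X Y _ _ => and_congr (smyth_adj hgc) (hoare_adj hgc)⟩
end

section
/- Let (α, C, A, γ) be a Galois connection between complete lattices, let f : C → ℘∧(C) be S-monotone, and define the best correct approximation f^A : A → ℘(A) by f^A(a) = α^s(f(γ(a))). Then f^A maps into ℘∧(A) and is S-monotone, and an S-monotone multivalued function f♯ : A → ℘∧(A) is an S-correct approximation of f if and only if f^A(a) ⪯_S f♯(a) for every a ∈ A. The analogous characterizations hold for H-correct approximations (with ℘∨ and ⪯_H) and for EM-correct approximations (with ℘◇ and ⪯_EM). -/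
section Helpers
variable {C A : Type*} [CompleteLattice C] [CompleteLattice A]
  {α : C → A} {γ : A → C}

lemma bca_inf_mem (hgc : GaloisConnection α γ) (f : C → Set C) (hf : ∀ c, sInf (f c) ∈ f c) (a : A) :
    sInf (α '' f (γ a)) ∈ α '' f (γ a) := by
  have h : α (sInf (f (γ a))) = sInf (α '' f (γ a)) := by
    apply le_antisymm
    · apply le_sInf
      rintro b ⟨x, hx, rfl⟩
      exact hgc.monotone_l (sInf_le hx)
    · exact sInf_le (Set.mem_image_of_mem α (hf (γ a)))
  rw [← h]
  exact Set.mem_image_of_mem α (hf (γ a))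

lemma bca_sup_mem (hgc : GaloisConnection α γ) (f : C → Set C) (hf : ∀ c, sSup (f c) ∈ f c) (a : A) :
    sSup (α '' f (γ a)) ∈ α '' f (γ a) := by
  have h : α (sSup (f (γ a))) = sSup (α '' f (γ a)) := by
    apply le_antisymm
    · exact le_sSup (Set.mem_image_of_mem α (hf (γ a)))
    · apply sSup_le
      rintro b ⟨x, hx, rfl⟩
      exact hgc.monotone_l (le_sSup hx)
  rw [← h]
  exact Set.mem_image_of_mem α (hf (γ a))

lemma bca_smyth_mono (hgc : GaloisConnection α γ) (f : C → Set C)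
    (hm : ∀ x y : C, x ≤ y → SmythLE (f x) (f y)) {a b : A} (hab : a ≤ b) :
    SmythLE (α '' f (γ a)) (α '' f (γ b)) := by
  rintro y ⟨x, hx, rfl⟩
  obtain ⟨z, hz, hzx⟩ := hm _ _ (hgc.monotone_u hab) x hx
  exact ⟨α z, Set.mem_image_of_mem α hz, hgc.monotone_l hzx⟩

lemma bca_hoare_mono (hgc : GaloisConnection α γ) (f : C → Set C)
    (hm : ∀ x y : C, x ≤ y → HoareLE (f x) (f y)) {a b : A} (hab : a ≤ b) :
    HoareLE (α '' f (γ a)) (α '' f (γ b)) := by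
  rintro y ⟨x, hx, rfl⟩
  obtain ⟨z, hz, hxz⟩ := hm _ _ (hgc.monotone_u hab) x hx
  exact ⟨α z, Set.mem_image_of_mem α hz, hgc.monotone_l hxz⟩

lemma bca_smyth_iff (hgc : GaloisConnection α γ) (f : C → Set C) (f' : A → Set A) :
    (∀ a : A, SmythLE (f (γ a)) (γ '' f' a)) ↔
      ∀ a : A, SmythLE (α '' f (γ a)) (f' a) := by
  constructor
  · intro h a y hy
    obtain ⟨x, hx, hxy⟩ := h a (γ y) (Set.mem_image_of_mem γ hy)
    exact ⟨α x, Set.mem_image_of_mem α hx, (hgc x y).mpr hxy⟩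
  · rintro h a _ ⟨y, hy, rfl⟩
    obtain ⟨_, ⟨x, hx, rfl⟩, hxy⟩ := h a y hy
    exact ⟨x, hx, (hgc x y).mp hxy⟩

lemma bca_hoare_iff (hgc : GaloisConnection α γ) (f : C → Set C) (f' : A → Set A) :
    (∀ a : A, HoareLE (f (γ a)) (γ '' f' a)) ↔
      ∀ a : A, HoareLE (α '' f (γ a)) (f' a) := by
  constructor
  · rintro h a _ ⟨x, hx, rfl⟩
    obtain ⟨_, ⟨y, hy, rfl⟩, hxy⟩ := h a x hx
    exact ⟨y, hy, (hgc x y).mpr hxy⟩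
  · intro h a x hx
    obtain ⟨y, hy, hxy⟩ := h a (α x) (Set.mem_image_of_mem α hx)
    exact ⟨γ y, Set.mem_image_of_mem γ hy, (hgc x y).mp hxy⟩

end Helpers

/-- best correct approximation: given a Galois connection
`(α, C, A, γ)` between complete lattices, for any S-monotone `f : C → ℘∧(C)` the
best correct approximation `f^A a = α^s (f (γ a))` maps into `℘∧(A)`, is S-monotone,
and an S-monotone `f♯ : A → ℘∧(A)` is an S-correct approximation of `f` iff
`f^A a ⪯_S f♯ a` for every `a`; analogously for the Hoare and Egli-Milner cases. -/
theorem best_correct_approximation {C A : Type*}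
    [CompleteLattice C] [CompleteLattice A]
    (α : C → A) (γ : A → C) (hgc : GaloisConnection α γ) :
    -- Smyth case
    (∀ f : C → Set C, (∀ c, sInf (f c) ∈ f c) →
      (∀ x y : C, x ≤ y → SmythLE (f x) (f y)) →
      ((∀ a : A, sInf (α '' f (γ a)) ∈ α '' f (γ a)) ∧
       (∀ a b : A, a ≤ b → SmythLE (α '' f (γ a)) (α '' f (γ b))) ∧
       (∀ f' : A → Set A, (∀ a, sInf (f' a) ∈ f' a) →
         (∀ a b : A, a ≤ b → SmythLE (f' a) (f' b)) →
         ((∀ a : A, SmythLE (f (γ a)) (γ '' f' a)) ↔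
           ∀ a : A, SmythLE (α '' f (γ a)) (f' a))))) ∧
    -- Hoare case
    (∀ f : C → Set C, (∀ c, sSup (f c) ∈ f c) →
      (∀ x y : C, x ≤ y → HoareLE (f x) (f y)) →
      ((∀ a : A, sSup (α '' f (γ a)) ∈ α '' f (γ a)) ∧
       (∀ a b : A, a ≤ b → HoareLE (α '' f (γ a)) (α '' f (γ b))) ∧
       (∀ f' : A → Set A, (∀ a, sSup (f' a) ∈ f' a) →
         (∀ a b : A, a ≤ b → HoareLE (f' a) (f' b)) →
         ((∀ a : A, HoareLE (f (γ a)) (γ '' f' a)) ↔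
           ∀ a : A, HoareLE (α '' f (γ a)) (f' a))))) ∧
    -- Egli-Milner case
    (∀ f : C → Set C, (∀ c, sInf (f c) ∈ f c ∧ sSup (f c) ∈ f c) →
      (∀ x y : C, x ≤ y → EgliMilnerLE (f x) (f y)) →
      ((∀ a : A, sInf (α '' f (γ a)) ∈ α '' f (γ a) ∧ sSup (α '' f (γ a)) ∈ α '' f (γ a)) ∧
       (∀ a b : A, a ≤ b → EgliMilnerLE (α '' f (γ a)) (α '' f (γ b))) ∧
       (∀ f' : A → Set A, (∀ a, sInf (f' a) ∈ f' a ∧ sSup (f' a) ∈ f' a) →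
         (∀ a b : A, a ≤ b → EgliMilnerLE (f' a) (f' b)) →
         ((∀ a : A, EgliMilnerLE (f (γ a)) (γ '' f' a)) ↔
           ∀ a : A, EgliMilnerLE (α '' f (γ a)) (f' a))))) := by
  refine ⟨?_, ?_, ?_⟩
  · intro f hf hm
    exact ⟨bca_inf_mem hgc f hf, fun a b hab => bca_smyth_mono hgc f hm hab,
      fun f' _ _ => bca_smyth_iff hgc f f'⟩
  · intro f hf hm
    exact ⟨bca_sup_mem hgc f hf, fun a b hab => bca_hoare_mono hgc f hm hab,
      fun f' _ _ => bca_hoare_iff hgc f f'⟩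
  · intro f hf hm
    refine ⟨fun a => ⟨bca_inf_mem hgc f (fun c => (hf c).1) a,
        bca_sup_mem hgc f (fun c => (hf c).2) a⟩,
      fun a b hab => ⟨bca_smyth_mono hgc f (fun x y h => (hm x y h).1) hab,
        bca_hoare_mono hgc f (fun x y h => (hm x y h).2) hab⟩,
      fun f' _ _ => ?_⟩
    constructor
    · intro h a
      exact ⟨(bca_smyth_iff hgc f f').mp (fun a => (h a).1) a,
        (bca_hoare_iff hgc f f').mp (fun a => (h a).2) a⟩
    · intro h a
      exact ⟨(bca_smyth_iff hgc f f').mpr (fun a => (h a).1) a,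
        (bca_hoare_iff hgc f f').mpr (fun a => (h a).2) a⟩
end

section
/- Let (α, C, A, γ) be a Galois connection between complete lattices, let f : C → ℘∧(C) and f♯ : A → ℘∧(A) be S-monotone multivalued functions, and suppose f♯ is a complete approximation of f, i.e., α^s(f(c)) = f♯(α(c)) for every c ∈ C. Then α(lfp(f)) = lfp(f♯), where lfp denotes the least fixed point of a multivalued function (the least element of {x : x ∈ f(x)}). -/
lemma smyth_lfp {C : Type*} [CompleteLattice C]
    (f : C → Set C) (hf₁ : ∀ c, sInf (f c) ∈ f c)
    (hf₂ : ∀ x y : C, x ≤ y → SmythLE (f x) (f y)) :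
    IsLeast {x | x ∈ f x} (OrderHom.lfp ⟨fun c => sInf (f c), by
      intro x y hxy
      exact le_sInf fun b hb => (hf₂ x y hxy b hb).elim fun a ⟨ha, hab⟩ =>
        (sInf_le ha).trans hab⟩) := by
  set g : C →o C := ⟨fun c => sInf (f c), by
      intro x y hxy
      exact le_sInf fun b hb => (hf₂ x y hxy b hb).elim fun a ⟨ha, hab⟩ =>
        (sInf_le ha).trans hab⟩ with hg
  constructor
  · have := OrderHom.map_lfp g
    simp only [Set.mem_setOf_eq]
    have : sInf (f (OrderHom.lfp g)) = OrderHom.lfp g := OrderHom.map_lfp g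
    have h0 := hf₁ (OrderHom.lfp g)
    rwa [this] at h0
  · intro x hx
    exact OrderHom.lfp_le g (sInf_le hx)

/-- complete least fixed point approximation: if `(α, C, A, γ)` is a
Galois connection between complete lattices, `f : C → ℘∧(C)` and `f♯ : A → ℘∧(A)`
are S-monotone, and `f♯` is a complete approximation of `f`, i.e.
`α^s(f c) = f♯ (α c)` for all `c`, then `α (lfp f) = lfp f♯`. -/
theorem complete_lfp_approximation {C A : Type*}
    [CompleteLattice C] [CompleteLattice A]
    (α : C → A) (γ : A → C) (hgc : GaloisConnection α γ)
    (f : C → Set C) (hf₁ : ∀ c, sInf (f c) ∈ f c)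
    (hf₂ : ∀ x y : C, x ≤ y → SmythLE (f x) (f y))
    (f' : A → Set A) (hf'₁ : ∀ a, sInf (f' a) ∈ f' a)
    (hf'₂ : ∀ x y : A, x ≤ y → SmythLE (f' x) (f' y))
    (hcomplete : ∀ c : C, α '' f c = f' (α c)) :
    (∃ L, IsLeast {x | x ∈ f x} L) ∧ (∃ L', IsLeast {a | a ∈ f' a} L') ∧
    ∀ L L', IsLeast {x | x ∈ f x} L → IsLeast {a | a ∈ f' a} L' → α L = L' := by
  refine ⟨⟨_, smyth_lfp f hf₁ hf₂⟩, ⟨_, smyth_lfp f' hf'₁ hf'₂⟩, ?_⟩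
  intro L L' hL hL'
  have hαL : IsLeast {a | a ∈ f' a} (α L) := by
    constructor
    · have : α L ∈ α '' f L := Set.mem_image_of_mem α hL.1
      rwa [hcomplete L] at this
    · intro a ha
      rw [hgc _ _]
      have hLeq : L = OrderHom.lfp ⟨fun c => sInf (f c), by
          intro x y hxy
          exact le_sInf fun b hb => (hf₂ x y hxy b hb).elim fun a ⟨ha, hab⟩ =>
            (sInf_le ha).trans hab⟩ := hL.unique (smyth_lfp f hf₁ hf₂)
      rw [hLeq]
      apply OrderHom.lfp_le
      show sInf (f (γ a)) ≤ γ a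
      obtain ⟨b, hb, hba⟩ := hf'₂ (α (γ a)) a (hgc.l_u_le a) a ha
      rw [← hcomplete (γ a)] at hb
      obtain ⟨c, hc, rfl⟩ := hb
      rw [← hgc]
      exact (hgc.monotone_l (sInf_le hc)).trans hba
  exact hαL.unique hL'
end

section
/- Let (α, C, A, γ) be a Galois connection between complete lattices, let f : C → ℘∧(C) and f♯ : A → ℘∧(A) be S-monotone multivalued functions, and suppose that for every c ∈ C, α^s(f(c)) ⪯_S f♯(α(c)). Then α(lfp(f)) ≤_A lfp(f♯), where lfp denotes the least fixed point of a multivalued function. -/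
private def smythHom {C : Type*} [CompleteLattice C] (f : C → Set C)
    (hf₂ : ∀ x y : C, x ≤ y → SmythLE (f x) (f y)) : C →o C where
  toFun c := sInf (f c)
  monotone' := by
    intro x y hxy
    refine le_sInf fun z hz => ?_
    obtain ⟨w, hw, hwz⟩ := hf₂ x y hxy z hz
    exact (sInf_le hw).trans hwz

private theorem smyth_isLeast {C : Type*} [CompleteLattice C] (f : C → Set C)
    (hf₁ : ∀ c, sInf (f c) ∈ f c)
    (hf₂ : ∀ x y : C, x ≤ y → SmythLE (f x) (f y)) :
    IsLeast {x | x ∈ f x} (OrderHom.lfp (smythHom f hf₂)) := by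
  constructor
  · have h : sInf (f (OrderHom.lfp (smythHom f hf₂))) = OrderHom.lfp (smythHom f hf₂) :=
      OrderHom.map_lfp (smythHom f hf₂)
    have h2 := hf₁ (OrderHom.lfp (smythHom f hf₂))
    rw [h] at h2
    exact h2
  · intro x hx
    exact OrderHom.lfp_le _ (sInf_le hx)

/-- abstraction-based correct least fixed point approximation: if
`(α, C, A, γ)` is a Galois connection between complete lattices, `f : C → ℘∧(C)` and
`f♯ : A → ℘∧(A)` are S-monotone, and `α^s(f c) ⪯_S f♯ (α c)` for every `c`, then
`α (lfp f) ≤ lfp f♯`. -/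
theorem abstraction_correct_lfp_approximation {C A : Type*}
    [CompleteLattice C] [CompleteLattice A]
    (α : C → A) (γ : A → C) (hgc : GaloisConnection α γ)
    (f : C → Set C) (hf₁ : ∀ c, sInf (f c) ∈ f c)
    (hf₂ : ∀ x y : C, x ≤ y → SmythLE (f x) (f y))
    (f' : A → Set A) (hf'₁ : ∀ a, sInf (f' a) ∈ f' a)
    (hf'₂ : ∀ x y : A, x ≤ y → SmythLE (f' x) (f' y))
    (hcorrect : ∀ c : C, SmythLE (α '' f c) (f' (α c))) :
    (∃ L, IsLeast {x | x ∈ f x} L) ∧ (∃ L', IsLeast {a | a ∈ f' a} L') ∧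
    ∀ L L', IsLeast {x | x ∈ f x} L → IsLeast {a | a ∈ f' a} L' → α L ≤ L' := by
  refine ⟨⟨_, smyth_isLeast f hf₁ hf₂⟩, ⟨_, smyth_isLeast f' hf'₁ hf'₂⟩, ?_⟩
  intro L L' hL hL'
  have hLeq : L = OrderHom.lfp (smythHom f hf₂) := hL.unique (smyth_isLeast f hf₁ hf₂)
  -- show γ L' is a prefixed point of smythHom f
  have key : α (sInf (f (γ L'))) ≤ L' := by
    have hαγ : α (γ L') ≤ L' := hgc.l_u_le L'
    obtain ⟨b, hb, hbL⟩ := hf'₂ _ _ hαγ L' hL'.1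
    obtain ⟨a, ha, hab⟩ := hcorrect (γ L') b hb
    obtain ⟨x, hx, rfl⟩ := ha
    exact (hgc.monotone_l (sInf_le hx)).trans (hab.trans hbL)
  have hpre : (smythHom f hf₂) (γ L') ≤ γ L' := hgc.le_u key
  have : L ≤ γ L' := hLeq ▸ OrderHom.lfp_le _ hpre
  exact hgc.l_le this
end

section
/- Let (α_i, S_i, A_i, γ_i), i = 1,…,n, be finitely disjunctive Galois insertions between complete lattices, let S = ∏_{i=1}^n S_i, A = ∏_{i=1}^n A_i, and let (α, S, A, γ) be their componentwise product (α(c) = (α_i(c_i))_i, γ(a) = (γ_i(a_i))_i). Let Γ = ⟨S_i, u_i⟩_{i=1}^n be a supermodular game with best response correspondence B, and assume B(s) is a nonempty subcomplete sublattice of S for every s ∈ S. Let Γ^G = ⟨A_i, u_i^G⟩_{i=1}^n be the abstract game with u_i^G(a) = u_i(γ(a)) and best response correspondence B^G, and assume B^G(a) is a nonempty subcomplete sublattice of A for every a ∈ A. Suppose that for every a ∈ A, (⋁_S B(γ(a))) ∨_S γ(⋀_A B^G(a)) ∈ γ(A). Then Eq(Γ) ⪯_EM γ^s(Eq(Γ^G));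 in particular the least equilibrium of Γ is ≤ the image under γ of the least equilibrium of Γ^G, and likewise for the greatest equilibria. -/
/-- The best response correspondence of the game with strategy spaces `S j` and
utility functions `u i : (∀ j, S j) → ℝ^{N i}`:
`B(s) = ∏ᵢ Bᵢ(s₋ᵢ)` where `Bᵢ(s₋ᵢ) = {xᵢ | ∀ yᵢ, uᵢ(yᵢ, s₋ᵢ) ≤ uᵢ(xᵢ, s₋ᵢ)}`. -/
def bestResponse {n : ℕ} {S : Fin n → Type*} [∀ j, CompleteLattice (S j)]
    {N : Fin n → ℕ} (u : ∀ i, (∀ j, S j) → (Fin (N i) → ℝ))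
    (s : ∀ j, S j) : Set (∀ j, S j) :=
  {t | ∀ i, ∀ x : S i, u i (Function.update s i x) ≤ u i (Function.update s i (t i))}

/-- The pure strategy Nash equilibria: the fixed points of the best response. -/
def nashEq {n : ℕ} {S : Fin n → Type*} [∀ j, CompleteLattice (S j)]
    {N : Fin n → ℕ} (u : ∀ i, (∀ j, S j) → (Fin (N i) → ℝ)) : Set (∀ j, S j) :=
  {s | s ∈ bestResponse u s}

section Topkis


variable {n : ℕ} {S : Fin n → Type*} [∀ j, CompleteLattice (S j)]
  {N : Fin n → ℕ} {u : ∀ i, (∀ j, S j) → (Fin (N i) → ℝ)}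

lemma br_inf_mem
    (hB : ∀ s : ∀ j, S j, (bestResponse u s).Nonempty ∧
      ∀ Z ⊆ bestResponse u s, Z.Nonempty →
        sInf Z ∈ bestResponse u s ∧ sSup Z ∈ bestResponse u s)
    (s : ∀ j, S j) : sInf (bestResponse u s) ∈ bestResponse u s :=
  ((hB s).2 _ subset_rfl (hB s).1).1

lemma br_sup_mem
    (hB : ∀ s : ∀ j, S j, (bestResponse u s).Nonempty ∧
      ∀ Z ⊆ bestResponse u s, Z.Nonempty →
        sInf Z ∈ bestResponse u s ∧ sSup Z ∈ bestResponse u s)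
    (s : ∀ j, S j) : sSup (bestResponse u s) ∈ bestResponse u s :=
  ((hB s).2 _ subset_rfl (hB s).1).2

lemma topkis_inf_mono
    (hsm : ∀ i, ∀ s : ∀ j, S j, ∀ x y : S i,
      u i (Function.update s i x) + u i (Function.update s i y) ≤
        u i (Function.update s i (x ⊔ y)) + u i (Function.update s i (x ⊓ y)))
    (hid : ∀ i, ∀ x x' : S i, x ≤ x' → ∀ s t : ∀ j, S j, s ≤ t →
      u i (Function.update s i x') - u i (Function.update s i x) ≤
        u i (Function.update t i x') - u i (Function.update t i x))
    (hB : ∀ s : ∀ j, S j, (bestResponse u s).Nonempty ∧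
      ∀ Z ⊆ bestResponse u s, Z.Nonempty →
        sInf Z ∈ bestResponse u s ∧ sSup Z ∈ bestResponse u s)
    {s t : ∀ j, S j} (hst : s ≤ t) :
    sInf (bestResponse u s) ≤ sInf (bestResponse u t) := by
  have hxm := br_inf_mem hB s
  have hym := br_inf_mem hB t
  set x := sInf (bestResponse u s) with hxdef
  set y := sInf (bestResponse u t) with hydef
  have hmem : x ⊓ y ∈ bestResponse u s := by
    simp only [bestResponse, Set.mem_setOf_eq] at hxm hym ⊢
    intro i z
    have h1 := hsm i t (x i) (y i)
    have h2 := hid i (x i ⊓ y i) (x i) inf_le_left s t hst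
    have h3 := hym i (x i ⊔ y i)
    have h4 := hxm i z
    simp only [Pi.inf_apply]
    intro k
    have h1k := h1 k; have h2k := h2 k; have h3k := h3 k; have h4k := h4 k
    simp only [Pi.add_apply, Pi.sub_apply] at h1k h2k
    linarith
  exact le_trans (sInf_le hmem) inf_le_right

lemma topkis_sup_mono
    (hsm : ∀ i, ∀ s : ∀ j, S j, ∀ x y : S i,
      u i (Function.update s i x) + u i (Function.update s i y) ≤
        u i (Function.update s i (x ⊔ y)) + u i (Function.update s i (x ⊓ y)))
    (hid : ∀ i, ∀ x x' : S i, x ≤ x' → ∀ s t : ∀ j, S j, s ≤ t →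
      u i (Function.update s i x') - u i (Function.update s i x) ≤
        u i (Function.update t i x') - u i (Function.update t i x))
    (hB : ∀ s : ∀ j, S j, (bestResponse u s).Nonempty ∧
      ∀ Z ⊆ bestResponse u s, Z.Nonempty →
        sInf Z ∈ bestResponse u s ∧ sSup Z ∈ bestResponse u s)
    {s t : ∀ j, S j} (hst : s ≤ t) :
    sSup (bestResponse u s) ≤ sSup (bestResponse u t) := by
  have hxm := br_sup_mem hB s
  have hym := br_sup_mem hB t
  set x := sSup (bestResponse u s) with hxdef
  set y := sSup (bestResponse u t) with hydef
  have hmem : x ⊔ y ∈ bestResponse u t := by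
    simp only [bestResponse, Set.mem_setOf_eq] at hxm hym ⊢
    intro i z
    have h1 := hsm i t (x i) (y i)
    have h2 := hid i (x i ⊓ y i) (x i) inf_le_left s t hst
    have h3 := hxm i (x i ⊓ y i)
    have h4 := hym i z
    simp only [Pi.sup_apply]
    intro k
    have h1k := h1 k; have h2k := h2 k; have h3k := h3 k; have h4k := h4 k
    simp only [Pi.add_apply, Pi.sub_apply] at h1k h2k
    linarith
  exact le_trans le_sup_left (le_sSup hmem)

end Topkis

/-- correctness of games with abstract strategy spaces: given finitely
disjunctive Galois insertions `(αᵢ, Sᵢ, Aᵢ, γᵢ)` with componentwise product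
`(α, S, A, γ)`, a supermodular game `Γ = ⟨Sᵢ, uᵢ⟩` whose best response `B` has
nonempty subcomplete-sublattice values, the abstract game `Γ^G = ⟨Aᵢ, uᵢ∘γ⟩` whose
best response `B^G` also has nonempty subcomplete-sublattice values, and assuming
`(⋁ B(γ a)) ⊔ γ(⋀ B^G(a)) ∈ γ(A)` for all `a`, the equilibria satisfy
`Eq(Γ) ⪯_EM γ^s(Eq(Γ^G))`; in particular the least (resp. greatest) equilibrium of
`Γ` is below the concretization of the least (resp. greatest) equilibrium of `Γ^G`. -/
theorem abstract_strategy_game_correctness {n : ℕ} {S A : Fin n → Type*}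
    [∀ j, CompleteLattice (S j)] [∀ j, CompleteLattice (A j)]
    (α : ∀ j, S j → A j) (γ : ∀ j, A j → S j)
    (hgc : ∀ j, GaloisConnection (α j) (γ j))
    (hgi : ∀ j, ∀ a : A j, α j (γ j a) = a)
    (hdisj : ∀ j, ∀ x y : A j, γ j (x ⊔ y) = γ j x ⊔ γ j y)
    {N : Fin n → ℕ} (u : ∀ i, (∀ j, S j) → (Fin (N i) → ℝ))
    -- Γ is supermodular: each uᵢ(·, s₋ᵢ) is supermodular …
    (hsm : ∀ i, ∀ s : ∀ j, S j, ∀ x y : S i,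
      u i (Function.update s i x) + u i (Function.update s i y) ≤
        u i (Function.update s i (x ⊔ y)) + u i (Function.update s i (x ⊓ y)))
    -- … and each uᵢ has increasing differences in (sᵢ, s₋ᵢ)
    (hid : ∀ i, ∀ x x' : S i, x ≤ x' → ∀ s t : ∀ j, S j, s ≤ t →
      u i (Function.update s i x') - u i (Function.update s i x) ≤
        u i (Function.update t i x') - u i (Function.update t i x))
    -- B(s) is a nonempty subcomplete sublattice of S
    (hB : ∀ s : ∀ j, S j, (bestResponse u s).Nonempty ∧
      ∀ Z ⊆ bestResponse u s, Z.Nonempty →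
        sInf Z ∈ bestResponse u s ∧ sSup Z ∈ bestResponse u s)
    -- B^G(a) is a nonempty subcomplete sublattice of A
    (hBG : ∀ a : ∀ j, A j,
      (bestResponse (fun i a => u i (fun j => γ j (a j))) a).Nonempty ∧
      ∀ Z ⊆ bestResponse (fun i a => u i (fun j => γ j (a j))) a, Z.Nonempty →
        sInf Z ∈ bestResponse (fun i a => u i (fun j => γ j (a j))) a ∧
        sSup Z ∈ bestResponse (fun i a => u i (fun j => γ j (a j))) a)
    -- key hypothesis: (⋁ B(γ a)) ⊔ γ(⋀ B^G(a)) ∈ γ(A)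
    (hkey : ∀ a : ∀ j, A j,
      (sSup (bestResponse u (fun j => γ j (a j))) ⊔
        fun j => γ j ((sInf (bestResponse (fun i a => u i (fun j => γ j (a j))) a)) j)) ∈
          Set.range (fun b : ∀ j, A j => fun j => γ j (b j))) :
    EgliMilnerLE (nashEq u)
      ((fun b : ∀ j, A j => fun j => γ j (b j)) ''
        nashEq (fun i a => u i (fun j => γ j (a j)))) ∧
    (∀ L L', IsLeast (nashEq u) L →
      IsLeast (nashEq (fun i a => u i (fun j => γ j (a j)))) L' →
      L ≤ fun j => γ j (L' j)) ∧
    (∀ G G', IsGreatest (nashEq u) G →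
      IsGreatest (nashEq (fun i a => u i (fun j => γ j (a j)))) G' →
      G ≤ fun j => γ j (G' j)) := by
  classical
  set uG : ∀ i, (∀ j, A j) → (Fin (N i) → ℝ) := fun i a => u i (fun j => γ j (a j)) with huG
  have hγmono : ∀ j, Monotone (γ j) := fun j => (hgc j).monotone_u
  have hupdate : ∀ (a : ∀ j, A j) (i : Fin n) (x : A i),
      (fun j => γ j (Function.update a i x j)) =
        Function.update (fun j => γ j (a j)) i (γ i x) := by
    intro a i x
    funext j
    exact Function.apply_update (fun j => γ j) a i x j
  have hsmG : ∀ i, ∀ a : ∀ j, A j, ∀ x y : A i,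
      uG i (Function.update a i x) + uG i (Function.update a i y) ≤
        uG i (Function.update a i (x ⊔ y)) + uG i (Function.update a i (x ⊓ y)) := by
    intro i a x y
    have hinf : γ i (x ⊓ y) = γ i x ⊓ γ i y := (hgc i).u_inf
    simp only [huG]
    rw [hupdate a i x, hupdate a i y, hupdate a i (x ⊔ y), hupdate a i (x ⊓ y),
      hdisj i x y, hinf]
    exact hsm i (fun j => γ j (a j)) (γ i x) (γ i y)
  have hidG : ∀ i, ∀ x x' : A i, x ≤ x' → ∀ a b : ∀ j, A j, a ≤ b →
      uG i (Function.update a i x') - uG i (Function.update a i x) ≤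
        uG i (Function.update b i x') - uG i (Function.update b i x) := by
    intro i x x' hxx a b hab
    simp only [huG]
    rw [hupdate a i x, hupdate a i x', hupdate b i x, hupdate b i x']
    exact hid i (γ i x) (γ i x') (hγmono i hxx) _ _ (fun j => hγmono j (hab j))
  -- central lemma: per abstract profile a
  have central : ∀ a : ∀ j, A j,
      (sSup (bestResponse u (fun j => γ j (a j))) ⊓
        (fun j => γ j (sInf (bestResponse uG a) j)) ∈
          bestResponse u (fun j => γ j (a j))) ∧
      ∃ b₀ ∈ bestResponse uG a,
        (fun j => γ j (b₀ j)) =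
          sSup (bestResponse u (fun j => γ j (a j))) ⊔
            (fun j => γ j (sInf (bestResponse uG a) j)) := by
    intro a
    obtain ⟨b₀, hb₀⟩ := hkey a
    set c : ∀ j, S j := fun j => γ j (a j) with hc
    set w : ∀ j, S j := sSup (bestResponse u c) with hw
    set e : ∀ j, A j := sInf (bestResponse uG a) with he
    set m : ∀ j, S j := fun j => γ j (e j) with hm
    have hwmem : ∀ (i : Fin n) (z : S i),
        u i (Function.update c i z) ≤ u i (Function.update c i (w i)) :=
      br_sup_mem hB c
    have hemem : ∀ (i : Fin n) (x : A i),
        uG i (Function.update a i x) ≤ uG i (Function.update a i (e i)) :=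
      br_inf_mem hBG a
    have hemem' : ∀ (i : Fin n) (x : A i),
        u i (Function.update c i (γ i x)) ≤ u i (Function.update c i (m i)) := by
      intro i x
      have h := hemem i x
      simp only [huG] at h
      rw [hupdate a i x, hupdate a i (e i)] at h
      exact h
    have hγib₀ : ∀ i, γ i (b₀ i) = w i ⊔ m i := by
      intro i
      have := congrFun hb₀ i
      simpa using this
    have hwm_le_m : ∀ i, u i (Function.update c i (w i ⊔ m i)) ≤
        u i (Function.update c i (m i)) := by
      intro i
      have h := hemem' i (b₀ i)
      rwa [hγib₀ i] at h
    have hm_le_wm : ∀ i, u i (Function.update c i (m i)) ≤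
        u i (Function.update c i (w i ⊔ m i)) := by
      intro i
      have h1 := hsm i c (w i) (m i)
      have h2 := hwmem i (w i ⊓ m i)
      intro k
      have h1k := h1 k; have h2k := h2 k
      simp only [Pi.add_apply] at h1k
      linarith
    constructor
    · -- w ⊓ m ∈ bestResponse u c
      intro i z
      have h1 := hsm i c (w i) (m i)
      have h2 := hwm_le_m i
      have h3 := hwmem i z
      simp only [Pi.inf_apply]
      intro k
      have h1k := h1 k; have h2k := h2 k; have h3k := h3 k
      simp only [Pi.add_apply] at h1k
      linarith
    · refine ⟨b₀, ?_, hb₀⟩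
      intro i x
      have h1 := hemem' i x
      have h2 := hm_le_wm i
      simp only [huG]
      rw [hupdate a i x, hupdate a i (b₀ i), hγib₀ i]
      exact le_trans h1 h2
  -- monotone fixpoint operators
  set g : (∀ j, S j) →o (∀ j, S j) :=
    ⟨fun s => sInf (bestResponse u s), fun s t h => topkis_inf_mono hsm hid hB h⟩ with hgdef
  set fG : (∀ j, A j) →o (∀ j, A j) :=
    ⟨fun a => sSup (bestResponse uG a), fun a b h => topkis_sup_mono hsmG hidG hBG h⟩ with hfGdef
  have smyth : SmythLE (nashEq u)
      ((fun b : ∀ j, A j => fun j => γ j (b j)) '' nashEq uG) := by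
    rintro y ⟨a, ha, rfl⟩
    have ha' : a ∈ bestResponse uG a := ha
    refine ⟨OrderHom.lfp g, ?_, ?_⟩
    · have hfix : g (OrderHom.lfp g) = OrderHom.lfp g := g.map_lfp
      have hmem : g (OrderHom.lfp g) ∈ bestResponse u (OrderHom.lfp g) :=
        br_inf_mem hB _
      show OrderHom.lfp g ∈ bestResponse u (OrderHom.lfp g)
      rw [hfix] at hmem
      exact hmem
    · refine g.lfp_le ?_
      have h1 : g (fun j => γ j (a j)) ≤
          sSup (bestResponse u (fun j => γ j (a j))) ⊓
            (fun j => γ j (sInf (bestResponse uG a) j)) := sInf_le (central a).1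
      have h2 : (fun j => γ j (sInf (bestResponse uG a) j)) ≤ fun j => γ j (a j) :=
        fun j => hγmono j (sInf_le ha' j)
      exact le_trans h1 (le_trans inf_le_right h2)
  have hoare : HoareLE (nashEq u)
      ((fun b : ∀ j, A j => fun j => γ j (b j)) '' nashEq uG) := by
    intro s hs
    have hs' : s ∈ bestResponse u s := hs
    obtain ⟨-, b₀, hb₀mem, hb₀eq⟩ := central (fun j => α j (s j))
    have hsle : s ≤ fun j => γ j (α j (s j)) := fun j => (hgc j).le_u_l (s j)
    have h123 : s ≤ fun j => γ j (b₀ j) := by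
      rw [hb₀eq]
      exact le_trans (le_sSup hs')
        (le_trans (topkis_sup_mono hsm hid hB hsle) le_sup_left)
    have h4 : (fun j => α j (s j)) ≤ b₀ := fun j => (hgc j).l_le (h123 j)
    have h5 : (fun j => α j (s j)) ≤ fG (fun j => α j (s j)) :=
      le_trans h4 (le_sSup hb₀mem)
    have h6 : (fun j => α j (s j)) ≤ OrderHom.gfp fG := fG.le_gfp h5
    refine ⟨(fun j => γ j (OrderHom.gfp fG j)), ⟨OrderHom.gfp fG, ?_, rfl⟩, ?_⟩
    · have hfix : fG (OrderHom.gfp fG) = OrderHom.gfp fG := fG.map_gfp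
      have hmem : fG (OrderHom.gfp fG) ∈ bestResponse uG (OrderHom.gfp fG) :=
        br_sup_mem hBG _
      show OrderHom.gfp fG ∈ bestResponse uG (OrderHom.gfp fG)
      rw [hfix] at hmem
      exact hmem
    · exact fun j => le_trans (hsle j) (hγmono j (h6 j))
  refine ⟨⟨smyth, hoare⟩, ?_, ?_⟩
  · intro L L' hL hL'
    obtain ⟨x, hx, hxle⟩ := smyth _ ⟨L', hL'.1, rfl⟩
    exact le_trans (hL.2 hx) hxle
  · intro G G' hG hG'
    obtain ⟨y, ⟨a, ha, rfl⟩, hGy⟩ := hoare G hG.1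
    exact le_trans hGy (fun j => hγmono j (hG'.2 ha j))
end

section
/- Let (α_i, S_i, A_i, γ_i), i = 1,…,n, be principal filter Galois connections between complete lattices (i.e., γ_i(A_i) = {c ∈ S_i : γ_i(⊥_{A_i}) ≤ c}) which are finitely disjunctive Galois insertions, let (α, S, A, γ) be their componentwise product with S = ∏ S_i and A = ∏ A_i, let Γ = ⟨S_i, u_i⟩_{i=1}^n be a supermodular game whose best response correspondence B takes values in nonempty subcomplete sublattices of S, and let Γ^G = ⟨A_i, u_i^G⟩_{i=1}^n be the abstract game with u_i^G(a) = u_i(γ(a)) whose best response correspondence B^G takes values in nonempty subcomplete sublattices of A. Then Eq(Γ) ⪯_EM γ^s(Eq(Γ^G)). -/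
section generic
variable {n : ℕ} {S : Fin n → Type*} [∀ j, CompleteLattice (S j)]
  {N : Fin n → ℕ} {u : ∀ i, (∀ j, S j) → (Fin (N i) → ℝ)}

theorem my_sup_mem_br
    (hsm : ∀ i, ∀ s : ∀ j, S j, ∀ x y : S i,
      u i (Function.update s i x) + u i (Function.update s i y) ≤
        u i (Function.update s i (x ⊔ y)) + u i (Function.update s i (x ⊓ y)))
    (hid : ∀ i, ∀ x x' : S i, x ≤ x' → ∀ s t : ∀ j, S j, s ≤ t →
      u i (Function.update s i x') - u i (Function.update s i x) ≤
        u i (Function.update t i x') - u i (Function.update t i x))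
    {s s' : ∀ j, S j} (hss : s ≤ s') {z z' : ∀ j, S j}
    (hz : z ∈ bestResponse u s) (hz' : z' ∈ bestResponse u s') :
    z ⊔ z' ∈ bestResponse u s' := by
  intro i c
  simp only [Pi.sup_apply]
  have h1 := hsm i s' (z i) (z' i)
  have h2 := hid i (z i ⊓ z' i) (z i) inf_le_left s s' hss
  have h3 := hz i (z i ⊓ z' i)
  have h4 := hz' i c
  intro k
  have e1 := h1 k; have e2 := h2 k; have e3 := h3 k; have e4 := h4 k
  simp only [Pi.add_apply, Pi.sub_apply] at e1 e2
  linarith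

theorem my_inf_mem_br
    (hsm : ∀ i, ∀ s : ∀ j, S j, ∀ x y : S i,
      u i (Function.update s i x) + u i (Function.update s i y) ≤
        u i (Function.update s i (x ⊔ y)) + u i (Function.update s i (x ⊓ y)))
    (hid : ∀ i, ∀ x x' : S i, x ≤ x' → ∀ s t : ∀ j, S j, s ≤ t →
      u i (Function.update s i x') - u i (Function.update s i x) ≤
        u i (Function.update t i x') - u i (Function.update t i x))
    {s s' : ∀ j, S j} (hss : s ≤ s') {z z' : ∀ j, S j}
    (hz : z ∈ bestResponse u s) (hz' : z' ∈ bestResponse u s') :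
    z ⊓ z' ∈ bestResponse u s := by
  intro i c
  simp only [Pi.inf_apply]
  have h1 := hsm i s (z i) (z' i)
  have h2 := hid i (z' i) (z i ⊔ z' i) le_sup_right s s' hss
  have h3 := hz' i (z i ⊔ z' i)
  have h4 := hz i c
  intro k
  have e1 := h1 k; have e2 := h2 k; have e3 := h3 k; have e4 := h4 k
  simp only [Pi.add_apply, Pi.sub_apply] at e1 e2
  linarith

theorem my_exists_eq_le
    (hsm : ∀ i, ∀ s : ∀ j, S j, ∀ x y : S i,
      u i (Function.update s i x) + u i (Function.update s i y) ≤
        u i (Function.update s i (x ⊔ y)) + u i (Function.update s i (x ⊓ y)))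
    (hid : ∀ i, ∀ x x' : S i, x ≤ x' → ∀ s t : ∀ j, S j, s ≤ t →
      u i (Function.update s i x') - u i (Function.update s i x) ≤
        u i (Function.update t i x') - u i (Function.update t i x))
    (hB : ∀ s : ∀ j, S j, (bestResponse u s).Nonempty ∧
      ∀ Z ⊆ bestResponse u s, Z.Nonempty →
        sInf Z ∈ bestResponse u s ∧ sSup Z ∈ bestResponse u s)
    (y : ∀ j, S j)
    (hy : ∀ i, ∀ c : S i, y i ≤ c →
      u i (Function.update y i c) ≤ u i (Function.update y i (y i))) :
    ∃ x ∈ nashEq u, x ≤ y := by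
  have hsupmem : ∀ s, sSup (bestResponse u s) ∈ bestResponse u s := fun s =>
    ((hB s).2 _ le_rfl (hB s).1).2
  set g : (∀ j, S j) → (∀ j, S j) := fun s => sSup (bestResponse u s) ⊓ y with hg
  have hmono : ∀ s s', s ≤ s' → g s ≤ g s' := by
    intro s s' h
    have hle : sSup (bestResponse u s) ≤ sSup (bestResponse u s') := by
      have := my_sup_mem_br hsm hid h (hsupmem s) (hsupmem s')
      calc sSup (bestResponse u s) ≤ sSup (bestResponse u s) ⊔ sSup (bestResponse u s') :=
            le_sup_left
        _ ≤ sSup (bestResponse u s') := le_sSup this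
    exact inf_le_inf_right y hle
  -- meet closure
  have hclose : ∀ s, s ≤ y → ∀ z ∈ bestResponse u s, z ⊓ y ∈ bestResponse u s := by
    intro s hsy z hz i c
    simp only [Pi.inf_apply]
    have h1 := hsm i s (z i) (y i)
    have h2 := hid i (y i) (z i ⊔ y i) le_sup_right s y hsy
    have h3 := hy i (z i ⊔ y i) le_sup_right
    have h4 := hz i c
    intro k
    have e1 := h1 k; have e2 := h2 k; have e3 := h3 k; have e4 := h4 k
    simp only [Pi.add_apply, Pi.sub_apply] at e1 e2
    linarith
  have hgmem : ∀ s, s ≤ y → g s ∈ bestResponse u s := fun s hsy =>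
    hclose s hsy _ (hsupmem s)
  set P : Set (∀ j, S j) := {s | s ≤ y ∧ s ≤ g s} with hP
  set x := sSup P with hx
  have hxley : x ≤ y := sSup_le (fun s hs => hs.1)
  have hxlegx : x ≤ g x := sSup_le (fun s hs =>
    le_trans hs.2 (hmono s x (le_sSup hs)))
  have hgxP : g x ∈ P := ⟨inf_le_right, hmono x (g x) hxlegx⟩
  have hfix : g x = x := le_antisymm (le_sSup hgxP) hxlegx
  refine ⟨x, ?_, hxley⟩
  have := hgmem x hxley
  rw [hfix] at this
  exact this

theorem my_exists_le_eq
    (hsm : ∀ i, ∀ s : ∀ j, S j, ∀ x y : S i,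
      u i (Function.update s i x) + u i (Function.update s i y) ≤
        u i (Function.update s i (x ⊔ y)) + u i (Function.update s i (x ⊓ y)))
    (hid : ∀ i, ∀ x x' : S i, x ≤ x' → ∀ s t : ∀ j, S j, s ≤ t →
      u i (Function.update s i x') - u i (Function.update s i x) ≤
        u i (Function.update t i x') - u i (Function.update t i x))
    (hB : ∀ s : ∀ j, S j, (bestResponse u s).Nonempty ∧
      ∀ Z ⊆ bestResponse u s, Z.Nonempty →
        sInf Z ∈ bestResponse u s ∧ sSup Z ∈ bestResponse u s)
    (x0 : ∀ j, S j)
    (hx0 : ∀ i, ∀ c : S i, c ≤ x0 i →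
      u i (Function.update x0 i c) ≤ u i (Function.update x0 i (x0 i))) :
    ∃ b ∈ nashEq u, x0 ≤ b := by
  have hinfmem : ∀ s, sInf (bestResponse u s) ∈ bestResponse u s := fun s =>
    ((hB s).2 _ le_rfl (hB s).1).1
  set g : (∀ j, S j) → (∀ j, S j) := fun s => sInf (bestResponse u s) ⊔ x0 with hg
  have hmono : ∀ s s', s ≤ s' → g s ≤ g s' := by
    intro s s' h
    have hle : sInf (bestResponse u s) ≤ sInf (bestResponse u s') := by
      have := my_inf_mem_br hsm hid h (hinfmem s) (hinfmem s')
      calc sInf (bestResponse u s) ≤ sInf (bestResponse u s) ⊓ sInf (bestResponse u s') :=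
            sInf_le this |>.trans inf_le_left |> fun _ => le_inf le_rfl (le_trans (sInf_le this) inf_le_right)
        _ ≤ sInf (bestResponse u s') := inf_le_right
    exact sup_le_sup_right hle x0
  have hclose : ∀ s, x0 ≤ s → ∀ z ∈ bestResponse u s, z ⊔ x0 ∈ bestResponse u s := by
    intro s hxs z hz i c
    simp only [Pi.sup_apply]
    have h1 := hsm i s (z i) (x0 i)
    have h2 := hid i (z i ⊓ x0 i) (x0 i) inf_le_right x0 s hxs
    have h3 := hx0 i (z i ⊓ x0 i) inf_le_right
    have h4 := hz i c
    intro k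
    have e1 := h1 k; have e2 := h2 k; have e3 := h3 k; have e4 := h4 k
    simp only [Pi.add_apply, Pi.sub_apply] at e1 e2
    linarith
  have hgmem : ∀ s, x0 ≤ s → g s ∈ bestResponse u s := fun s hxs =>
    hclose s hxs _ (hinfmem s)
  set P : Set (∀ j, S j) := {s | x0 ≤ s ∧ g s ≤ s} with hP
  set b := sInf P with hb
  have hx0b : x0 ≤ b := le_sInf (fun s hs => hs.1)
  have hgbb : g b ≤ b := le_sInf (fun s hs =>
    le_trans (hmono b s (sInf_le hs)) hs.2)
  have hgbP : g b ∈ P := ⟨le_sup_right, hmono (g b) b hgbb⟩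
  have hfix : g b = b := le_antisymm hgbb (sInf_le hgbP)
  refine ⟨b, ?_, hx0b⟩
  have := hgmem b hx0b
  rw [hfix] at this
  exact this

end generic


theorem my_gamma_update {n : ℕ} {S A : Fin n → Type*} (γ : ∀ j, A j → S j)
    (a : ∀ j, A j) (i : Fin n) (c : A i) :
    (fun j => γ j (Function.update a i c j)) =
      Function.update (fun j => γ j (a j)) i (γ i c) := by
  funext j
  rcases eq_or_ne j i with rfl | h
  · simp
  · simp [Function.update_of_ne h]


/-- Echenique-style correctness for principal filter abstractions:
with finitely disjunctive Galois insertions `(αᵢ, Sᵢ, Aᵢ, γᵢ)` that are principal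
filter Galois connections (`γᵢ(Aᵢ) = {c | γᵢ ⊥ ≤ c}`), a supermodular game
`Γ = ⟨Sᵢ, uᵢ⟩` whose best response has nonempty subcomplete-sublattice values, and
abstract game `Γ^G = ⟨Aᵢ, uᵢ∘γ⟩` likewise, we have `Eq(Γ) ⪯_EM γ^s(Eq(Γ^G))`. -/
theorem principal_filter_abstract_game_correctness {n : ℕ} {S A : Fin n → Type*}
    [∀ j, CompleteLattice (S j)] [∀ j, CompleteLattice (A j)]
    (α : ∀ j, S j → A j) (γ : ∀ j, A j → S j)
    (hgc : ∀ j, GaloisConnection (α j) (γ j))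
    (hgi : ∀ j, ∀ a : A j, α j (γ j a) = a)
    (hdisj : ∀ j, ∀ x y : A j, γ j (x ⊔ y) = γ j x ⊔ γ j y)
    (hpf : ∀ j, Set.range (γ j) = {c : S j | γ j ⊥ ≤ c})
    {N : Fin n → ℕ} (u : ∀ i, (∀ j, S j) → (Fin (N i) → ℝ))
    (hsm : ∀ i, ∀ s : ∀ j, S j, ∀ x y : S i,
      u i (Function.update s i x) + u i (Function.update s i y) ≤
        u i (Function.update s i (x ⊔ y)) + u i (Function.update s i (x ⊓ y)))
    (hid : ∀ i, ∀ x x' : S i, x ≤ x' → ∀ s t : ∀ j, S j, s ≤ t →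
      u i (Function.update s i x') - u i (Function.update s i x) ≤
        u i (Function.update t i x') - u i (Function.update t i x))
    (hB : ∀ s : ∀ j, S j, (bestResponse u s).Nonempty ∧
      ∀ Z ⊆ bestResponse u s, Z.Nonempty →
        sInf Z ∈ bestResponse u s ∧ sSup Z ∈ bestResponse u s)
    (hBG : ∀ a : ∀ j, A j,
      (bestResponse (fun i a => u i (fun j => γ j (a j))) a).Nonempty ∧
      ∀ Z ⊆ bestResponse (fun i a => u i (fun j => γ j (a j))) a, Z.Nonempty →
        sInf Z ∈ bestResponse (fun i a => u i (fun j => γ j (a j))) a ∧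
        sSup Z ∈ bestResponse (fun i a => u i (fun j => γ j (a j))) a) :
    EgliMilnerLE (nashEq u)
      ((fun b : ∀ j, A j => fun j => γ j (b j)) ''
        nashEq (fun i a => u i (fun j => γ j (a j)))) := by
  set uG : ∀ i, (∀ j, A j) → (Fin (N i) → ℝ) :=
    fun i a => u i (fun j => γ j (a j)) with huG
  have key : ∀ (a : ∀ j, A j) (i : Fin n) (c : A i),
      uG i (Function.update a i c) =
        u i (Function.update (fun j => γ j (a j)) i (γ i c)) :=
    fun a i c => congrArg (u i) (my_gamma_update γ a i c)
  -- γ ∘ α is join with γ ⊥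
  have hga : ∀ j (c : S j), γ j (α j c) = c ⊔ γ j ⊥ := by
    intro j c
    have h1 : c ⊔ γ j ⊥ ∈ Set.range (γ j) := by
      rw [hpf j]; exact le_sup_right
    obtain ⟨a, ha⟩ := h1
    refine le_antisymm ?_ (sup_le ((hgc j).le_u_l c) ((hgc j).monotone_u bot_le))
    have : α j c ≤ a := (hgc j _ _).mpr (le_of_le_of_eq le_sup_left ha.symm)
    exact le_of_le_of_eq ((hgc j).monotone_u this) ha
  -- abstract game supermodularity and increasing differences
  have hsmG : ∀ i, ∀ a : ∀ j, A j, ∀ x y : A i,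
      uG i (Function.update a i x) + uG i (Function.update a i y) ≤
        uG i (Function.update a i (x ⊔ y)) + uG i (Function.update a i (x ⊓ y)) := by
    intro i a x y
    rw [key, key, key, key, hdisj i x y, (hgc i).u_inf]
    exact hsm i _ _ _
  have hidG : ∀ i, ∀ x x' : A i, x ≤ x' → ∀ a a' : ∀ j, A j, a ≤ a' →
      uG i (Function.update a i x') - uG i (Function.update a i x) ≤
        uG i (Function.update a' i x') - uG i (Function.update a' i x) := by
    intro i x x' hxx' a a' haa'
    rw [key, key, key, key]
    exact hid i (γ i x) (γ i x') ((hgc i).monotone_u hxx') _ _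
      (fun j => (hgc j).monotone_u (haa' j))
  constructor
  · -- Smyth
    rintro y ⟨b, hb, rfl⟩
    set yS : ∀ j, S j := fun j => γ j (b j) with hyS
    have hy : ∀ i, ∀ c : S i, yS i ≤ c →
        u i (Function.update yS i c) ≤ u i (Function.update yS i (yS i)) := by
      intro i c hc
      have hrange : c ∈ Set.range (γ i) := by
        rw [hpf i]
        exact le_trans ((hgc i).monotone_u bot_le) hc
      obtain ⟨a, rfl⟩ := hrange
      have h := hb i a
      rw [key, key] at h
      exact h
    obtain ⟨x, hx1, hx2⟩ := my_exists_eq_le hsm hid hB yS hy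
    exact ⟨x, hx1, hx2⟩
  · -- Hoare
    intro x hx
    set a0 : ∀ j, A j := fun j => α j (x j) with ha0
    have hxw : x ≤ fun j => γ j (a0 j) := fun j => (hgc j).le_u_l (x j)
    have hx0 : ∀ i, ∀ c : A i, c ≤ a0 i →
        uG i (Function.update a0 i c) ≤ uG i (Function.update a0 i (a0 i)) := by
      intro i c hc
      rw [key, key]
      set w : ∀ j, S j := fun j => γ j (a0 j) with hw
      have hdle : γ i c ≤ x i ⊔ γ i ⊥ := by
        have := (hgc i).monotone_u hc
        rwa [hga i (x i)] at this
      have hdbot : γ i ⊥ ≤ γ i c := (hgc i).monotone_u bot_le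
      have hsupeq : γ i c ⊔ x i = γ i (a0 i) := by
        rw [show a0 i = α i (x i) from rfl, hga i (x i)]
        exact le_antisymm (sup_le hdle le_sup_left)
          (sup_le le_sup_right (le_trans hdbot le_sup_left))
      have h1 := hsm i w (γ i c) (x i)
      have h2 := hid i (γ i c ⊓ x i) (x i) inf_le_right x w hxw
      have h3 := hx i (γ i c ⊓ x i)
      have h4 : Function.update x i (x i) = x := Function.update_eq_self i x
      rw [h4] at h2 h3
      rw [← hsupeq]
      intro k
      have e1 := h1 k; have e2 := h2 k; have e3 := h3 k
      simp only [Pi.add_apply, Pi.sub_apply] at e1 e2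
      linarith
    obtain ⟨b, hb1, hb2⟩ := my_exists_le_eq hsmG hidG hBG a0 hx0
    refine ⟨fun j => γ j (b j), ⟨b, hb1, rfl⟩, fun j => ?_⟩
    exact le_trans (hxw j) ((hgc j).monotone_u (hb2 j))
end

section
/- Let Γ = ⟨S_i, u_i⟩_{i=1}^n be a supermodular game whose best response correspondence B takes values in nonempty subcomplete sublattices of S = ∏_{i=1}^n S_i, let (α_i, S_i, A_i, γ_i), i = 1,…,n, be Galois connections, and for each i let ρ_{−i} : ∏_{j≠i} S_j → ∏_{j≠i} S_j be the closure operator ρ_{−i}(s_{−i}) = (γ_j(α_j(s_j)))_{j≠i}. Define the game with abstract best response Γ_G = ⟨S_i, u_{i,G}⟩_{i=1}^n by u_{i,G}(s_i, s_{−i}) = u_i(s_i, ρ_{−i}(s_{−i})), and assume its best response correspondence B_G also takes values in nonempty subcomplete sublattices of S. Then Eq(Γ) ⪯_EM Eq(Γ_G); in particular, the least equilibrium of Γ is ≤ the least equilibrium of Γ_G and the greatest equilibrium of Γ is ≤ the greatest equilibrium of Γ_G. -/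
/-- The utility functions of the game with abstract best response `Γ_G`:
`u_{i,G}(sᵢ, s₋ᵢ) = uᵢ(sᵢ, ρ₋ᵢ(s₋ᵢ))` where `ρ₋ᵢ(s₋ᵢ) = (γⱼ (αⱼ (s j)))_{j ≠ i}`. -/
def abstractResponseUtility {n : ℕ} {S A : Fin n → Type*}
    [∀ j, CompleteLattice (S j)] [∀ j, CompleteLattice (A j)]
    (α : ∀ j, S j → A j) (γ : ∀ j, A j → S j)
    {N : Fin n → ℕ} (u : ∀ i, (∀ j, S j) → (Fin (N i) → ℝ))
    (i : Fin n) (s : ∀ j, S j) : Fin (N i) → ℝ :=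
  u i (Function.update (fun j => γ j (α j (s j))) i (s i))

private lemma fixAux_ge {β : Type*} [CompleteLattice β] (f : β → β)
    (hf : Monotone f) (s : β) (hs : s ≤ f s) : ∃ t, f t = t ∧ s ≤ t := by
  set P : Set β := {t | s ≤ t ∧ t ≤ f t} with hP
  have hsP : s ∈ P := ⟨le_rfl, hs⟩
  have hsm : s ≤ sSup P := le_sSup hsP
  have hmf : sSup P ≤ f (sSup P) :=
    sSup_le (fun t ht => ht.2.trans (hf (le_sSup ht)))
  have hfm : f (sSup P) ∈ P := ⟨hsm.trans hmf, hf hmf⟩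
  exact ⟨sSup P, le_antisymm (le_sSup hfm) hmf, hsm⟩

private lemma fixAux_le {β : Type*} [CompleteLattice β] (f : β → β)
    (hf : Monotone f) (s : β) (hs : f s ≤ s) : ∃ t, f t = t ∧ t ≤ s := by
  set P : Set β := {t | t ≤ s ∧ f t ≤ t} with hP
  have hsP : s ∈ P := ⟨le_rfl, hs⟩
  have hsm : sInf P ≤ s := sInf_le hsP
  have hmf : f (sInf P) ≤ sInf P :=
    le_sInf (fun t ht => (hf (sInf_le ht)).trans ht.2)
  have hfm : f (sInf P) ∈ P := ⟨hmf.trans hsm, hf hmf⟩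
  exact ⟨sInf P, le_antisymm hmf (sInf_le hfm), hsm⟩

/-- correctness of games with abstract best response: let
`Γ = ⟨Sᵢ, uᵢ⟩` be a supermodular game whose best response `B` has nonempty
subcomplete-sublattice values, `(αᵢ, Sᵢ, Aᵢ, γᵢ)` Galois connections, and
`Γ_G = ⟨Sᵢ, u_{i,G}⟩` with `u_{i,G}(sᵢ, s₋ᵢ) = uᵢ(sᵢ, ρ₋ᵢ(s₋ᵢ))`, whose best
response `B_G` also has nonempty subcomplete-sublattice values.  Then
`Eq(Γ) ⪯_EM Eq(Γ_G)`; in particular the least (resp. greatest) equilibrium of `Γ`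
is below the least (resp. greatest) equilibrium of `Γ_G`. -/
theorem abstract_best_response_game_correctness {n : ℕ} {S A : Fin n → Type*}
    [∀ j, CompleteLattice (S j)] [∀ j, CompleteLattice (A j)]
    (α : ∀ j, S j → A j) (γ : ∀ j, A j → S j)
    (hgc : ∀ j, GaloisConnection (α j) (γ j))
    {N : Fin n → ℕ} (u : ∀ i, (∀ j, S j) → (Fin (N i) → ℝ))
    -- Γ is supermodular: each uᵢ(·, s₋ᵢ) is supermodular …
    (hsm : ∀ i, ∀ s : ∀ j, S j, ∀ x y : S i,
      u i (Function.update s i x) + u i (Function.update s i y) ≤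
        u i (Function.update s i (x ⊔ y)) + u i (Function.update s i (x ⊓ y)))
    -- … and each uᵢ has increasing differences in (sᵢ, s₋ᵢ)
    (hid : ∀ i, ∀ x x' : S i, x ≤ x' → ∀ s t : ∀ j, S j, s ≤ t →
      u i (Function.update s i x') - u i (Function.update s i x) ≤
        u i (Function.update t i x') - u i (Function.update t i x))
    -- B(s) is a nonempty subcomplete sublattice of S
    (hB : ∀ s : ∀ j, S j, (bestResponse u s).Nonempty ∧
      ∀ Z ⊆ bestResponse u s, Z.Nonempty →
        sInf Z ∈ bestResponse u s ∧ sSup Z ∈ bestResponse u s)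
    -- B_G(s) is a nonempty subcomplete sublattice of S
    (hBG : ∀ s : ∀ j, S j,
      (bestResponse (abstractResponseUtility α γ u) s).Nonempty ∧
      ∀ Z ⊆ bestResponse (abstractResponseUtility α γ u) s, Z.Nonempty →
        sInf Z ∈ bestResponse (abstractResponseUtility α γ u) s ∧
        sSup Z ∈ bestResponse (abstractResponseUtility α γ u) s) :
    EgliMilnerLE (nashEq u) (nashEq (abstractResponseUtility α γ u)) ∧
    (∀ L L', IsLeast (nashEq u) L →
      IsLeast (nashEq (abstractResponseUtility α γ u)) L' → L ≤ L') ∧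
    (∀ G G', IsGreatest (nashEq u) G →
      IsGreatest (nashEq (abstractResponseUtility α γ u)) G' → G ≤ G') := by
  classical
  set ρ : (∀ j, S j) → (∀ j, S j) := fun s j => γ j (α j (s j)) with hρdef
  have hρ_ext : ∀ s, s ≤ ρ s := fun s j => (hgc j).le_u_l _
  have hρ_mono : Monotone ρ := fun s t h j => (hgc j).monotone_u ((hgc j).monotone_l (h j))
  -- the abstract game's utility at an updated profile
  have hupd : ∀ (s : ∀ j, S j) (i : Fin n) (x : S i),
      abstractResponseUtility α γ u i (Function.update s i x) =
        u i (Function.update (ρ s) i x) := by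
    intro s i x
    unfold abstractResponseUtility
    simp only [Function.update_self]
    have harg : Function.update (fun j => γ j (α j (Function.update s i x j))) i x =
        Function.update (ρ s) i x := by
      funext j
      by_cases h : j = i
      · subst h; simp
      · simp [Function.update_of_ne h, hρdef]
    rw [harg]
  -- B_G(s) = B(ρ s)
  have hBG_eq : ∀ s, bestResponse (abstractResponseUtility α γ u) s = bestResponse u (ρ s) := by
    intro s
    ext t
    simp only [bestResponse, Set.mem_setOf_eq, hupd]
  simp only [hBG_eq] at hBG
  -- Hoare monotonicity of B
  have Bh : ∀ s s' : ∀ j, S j, s ≤ s' →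
      ∀ x ∈ bestResponse u s, ∃ y ∈ bestResponse u s', x ≤ y := by
    intro s s' hss' x hx
    obtain ⟨b, hb⟩ := (hB s').1
    refine ⟨x ⊔ b, ?_, le_sup_left⟩
    intro i z
    have h1 : u i (Function.update s' i z) ≤ u i (Function.update s' i (b i)) := hb i z
    have h2 := hsm i s' (x i) (b i)
    have h3 := hid i (x i ⊓ b i) (x i) inf_le_left s s' hss'
    have h4 : u i (Function.update s i (x i ⊓ b i)) ≤ u i (Function.update s i (x i)) :=
      hx i _
    simp only [Pi.sup_apply]
    refine Pi.le_def.mpr fun k => ?_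
    have h1k := Pi.le_def.mp h1 k
    have h2k := Pi.le_def.mp h2 k
    have h3k := Pi.le_def.mp h3 k
    have h4k := Pi.le_def.mp h4 k
    simp only [Pi.add_apply, Pi.sub_apply] at h2k h3k
    linarith
  -- Smyth monotonicity of B
  have Bs : ∀ s s' : ∀ j, S j, s ≤ s' →
      ∀ y ∈ bestResponse u s', ∃ x ∈ bestResponse u s, x ≤ y := by
    intro s s' hss' y hy
    obtain ⟨b, hb⟩ := (hB s).1
    refine ⟨b ⊓ y, ?_, inf_le_right⟩
    intro i z
    have h1 : u i (Function.update s i z) ≤ u i (Function.update s i (b i)) := hb i z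
    have h2 := hsm i s (b i) (y i)
    have h3 := hid i (y i) (b i ⊔ y i) le_sup_right s s' hss'
    have h4 : u i (Function.update s' i (b i ⊔ y i)) ≤ u i (Function.update s' i (y i)) :=
      hy i _
    simp only [Pi.inf_apply]
    refine Pi.le_def.mpr fun k => ?_
    have h1k := Pi.le_def.mp h1 k
    have h2k := Pi.le_def.mp h2 k
    have h3k := Pi.le_def.mp h3 k
    have h4k := Pi.le_def.mp h4 k
    simp only [Pi.add_apply, Pi.sub_apply] at h2k h3k
    linarith
  -- extremal selections belong
  have hsupBG : ∀ s, sSup (bestResponse u (ρ s)) ∈ bestResponse u (ρ s) := by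
    intro s
    exact ((hBG s).2 _ subset_rfl (hBG s).1).2
  have hinfB : ∀ s, sInf (bestResponse u s) ∈ bestResponse u s := by
    intro s
    exact ((hB s).2 _ subset_rfl (hB s).1).1
  set φ : (∀ j, S j) → (∀ j, S j) := fun t => sSup (bestResponse u (ρ t)) with hφ
  have hφ_mono : Monotone φ := by
    intro a b hab
    refine sSup_le fun x hx => ?_
    obtain ⟨y, hy, hxy⟩ := Bh _ _ (hρ_mono hab) x hx
    exact hxy.trans (le_sSup hy)
  set χ : (∀ j, S j) → (∀ j, S j) := fun t => sInf (bestResponse u t) with hχ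
  have hχ_mono : Monotone χ := by
    intro a b hab
    refine le_sInf fun y hy => ?_
    obtain ⟨x, hx, hxy⟩ := Bs _ _ hab y hy
    exact (sInf_le hx).trans hxy
  have hnashG : ∀ t, t ∈ nashEq (abstractResponseUtility α γ u) ↔ t ∈ bestResponse u (ρ t) := by
    intro t
    simp only [nashEq, Set.mem_setOf_eq, hBG_eq]
  -- Hoare part
  have hHoare : HoareLE (nashEq u) (nashEq (abstractResponseUtility α γ u)) := by
    intro s hs
    obtain ⟨y, hy, hsy⟩ := Bh s (ρ s) (hρ_ext s) s hs
    have hsφ : s ≤ φ s := hsy.trans (le_sSup hy)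
    obtain ⟨t, htfix, hst⟩ := fixAux_ge φ hφ_mono s hsφ
    refine ⟨t, (hnashG t).2 ?_, hst⟩
    have := hsupBG t
    rwa [show sSup (bestResponse u (ρ t)) = t from htfix] at this
  -- Smyth part
  have hSmyth : SmythLE (nashEq u) (nashEq (abstractResponseUtility α γ u)) := by
    intro t ht
    have htB : t ∈ bestResponse u (ρ t) := (hnashG t).1 ht
    obtain ⟨z, hz, hzt⟩ := Bs t (ρ t) (hρ_ext t) t htB
    have hχt : χ t ≤ t := (sInf_le hz).trans hzt
    obtain ⟨m, hmfix, hmt⟩ := fixAux_le χ hχ_mono t hχt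
    refine ⟨m, ?_, hmt⟩
    have := hinfB m
    rwa [show sInf (bestResponse u m) = m from hmfix] at this
  refine ⟨⟨hSmyth, hHoare⟩, ?_, ?_⟩
  · intro L L' hL hL'
    obtain ⟨x, hx, hxL'⟩ := hSmyth L' hL'.1
    exact (hL.2 hx).trans hxL'
  · intro G G' hG hG'
    obtain ⟨y, hy, hGy⟩ := hHoare G hG.1
    exact hGy.trans (hG'.2 hy)
end
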